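/- Let H be a hyperplane supporting a convex body C in ℍ^d, let j be a point of C farthest from H, let h be the orthogonal projection of j onto H, and let J be the hyperplane through j orthogonal to the geodesic segment jh. Then J supports C at j, and moreover J ∩ C = {j}. -/

import Mathlib

noncomputable section

namespace HypSpace

/-- Inverse hyperbolic cosine. -/
def arcosh (x : ℝ) : ℝ := Real.log (x + Real.sqrt (x ^ 2 - 1))

/-- The Minkowski bilinear form on `ℝ^{d+1}` (signature `(d,1)`, the last
coordinate being timelike). -/
def mink (d : ℕ) (x y : EuclideanSpace ℝ (Fin (d + 1))) : ℝ :=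
  (∑ i : Fin d, x i.castSucc * y i.castSucc) - x (Fin.last d) * y (Fin.last d)

/-- The hyperboloid model of `d`-dimensional hyperbolic space: the upper sheet
of the two-sheeted hyperboloid `mink x x = -1`. -/
def Pt (d : ℕ) : Type := {x : EuclideanSpace ℝ (Fin (d + 1)) // mink d x x = -1 ∧ 0 < x (Fin.last d)}

variable {d : ℕ}

/-- Hyperbolic distance between two points of `ℍ^d`. -/
def hdist (p q : Pt d) : ℝ := arcosh (-(mink d p.1 q.1))

/-- The geodesic segment between `a` and `b`, described metrically via betweenness
(hyperbolic space is uniquely geodesic). -/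
def seg (a b : Pt d) : Set (Pt d) := {p | hdist a p + hdist p b = hdist a b}

/-- A set is (geodesically) convex if it contains the segment between any two of its points. -/
def IsConvexSet (C : Set (Pt d)) : Prop := ∀ a ∈ C, ∀ b ∈ C, seg a b ⊆ C

/-- The convex hull: the smallest convex set containing `A`. -/
def chull (A : Set (Pt d)) : Set (Pt d) := ⋂₀ {C | IsConvexSet C ∧ A ⊆ C}

/-- The totally geodesic hyperplane with (spacelike) normal vector `v`. -/
def plane (v : EuclideanSpace ℝ (Fin (d + 1))) : Set (Pt d) := {p | mink d v p.1 = 0}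

/-- A hyperplane of `ℍ^d`: the trace on the hyperboloid of a linear hyperplane
with spacelike unit normal. -/
def IsHyperplane (H : Set (Pt d)) : Prop := ∃ v, mink d v v = 1 ∧ H = plane v

/-- Distance from a point to a set. -/
def distPS (p : Pt d) (S : Set (Pt d)) : ℝ := sInf (hdist p '' S)

/-- Distance between two sets. -/
def distSS (A B : Set (Pt d)) : ℝ := sInf {r | ∃ a ∈ A, ∃ b ∈ B, hdist a b = r}

/-- `h` is the orthogonal projection of `g` onto `H`: the point of `H`
realizing the distance from `g` to `H`.  For a hyperplane `H` with `a ∈ H`,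
`IsProj b H a` also expresses that `H` is orthogonal to the segment `ab` at `a`. -/
def IsProj (g : Pt d) (H : Set (Pt d)) (h : Pt d) : Prop :=
  h ∈ H ∧ ∀ k ∈ H, hdist g h ≤ hdist g k

/-- Two hyperplanes are ultraparallel if they are disjoint and not asymptotically
parallel (their distance is positive, i.e. they admit a common perpendicular). -/
def Ultraparallel (H J : Set (Pt d)) : Prop :=
  IsHyperplane H ∧ IsHyperplane J ∧ H ∩ J = ∅ ∧ 0 < distSS H J

/-- `p` is an interior point of `C`. -/
def IsIntr (C : Set (Pt d)) (p : Pt d) : Prop := ∃ ε > 0, ∀ q, hdist p q < ε → q ∈ C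

/-- `p` is a boundary point of the (closed) set `C`. -/
def IsBdry (C : Set (Pt d)) (p : Pt d) : Prop := p ∈ C ∧ ¬ IsIntr C p

/-- `C` is bounded. -/
def IsBddSet (C : Set (Pt d)) : Prop := ∃ R, ∀ a ∈ C, ∀ b ∈ C, hdist a b ≤ R

/-- `C` is closed. -/
def IsClosedSet (C : Set (Pt d)) : Prop :=
  ∀ p : Pt d, (∀ ε > 0, ∃ q ∈ C, hdist p q < ε) → p ∈ C

/-- A convex body: a compact (closed and bounded) convex set with nonempty interior. -/
def IsBody (C : Set (Pt d)) : Prop :=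
  IsConvexSet C ∧ IsBddSet C ∧ IsClosedSet C ∧ ∃ p, IsIntr C p

/-- The hyperplane `H` supports `C`: it meets `C` but misses its interior. -/
def Supports (H C : Set (Pt d)) : Prop :=
  IsHyperplane H ∧ (H ∩ C).Nonempty ∧ ∀ p, IsIntr C p → p ∉ H

/-- The width of `C` determined by `H`, as the maximum distance from `H`
to a point of `C`. -/
def width (H C : Set (Pt d)) : ℝ := sSup ((fun c => distPS c H) '' C)

/-- The width of `C` determined by `H`, as the distance from `H` to a farthest
supporting hyperplane of `C` ultraparallel to `H`. -/
def widthUP (H C : Set (Pt d)) : ℝ :=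
  sSup {r | ∃ J, Supports J C ∧ Ultraparallel H J ∧ distSS H J = r}

/-- The thickness of `C`: the minimum width over supporting hyperplanes. -/
def thickness (C : Set (Pt d)) : ℝ := sInf {r | ∃ H, Supports H C ∧ width H C = r}

/-- The diameter of `C`. -/
def diam (C : Set (Pt d)) : ℝ := sSup {r | ∃ a ∈ C, ∃ b ∈ C, hdist a b = r}

/-- A body of constant width `δ`. -/
def ConstWidth (W : Set (Pt d)) (δ : ℝ) : Prop :=
  IsBody W ∧ ∀ H, Supports H W → width H W = δ

/-- A complete set of diameter `δ`. -/
def CompleteSet (C : Set (Pt d)) (δ : ℝ) : Prop :=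
  diam C = δ ∧ ∀ x, x ∉ C → diam (C ∪ {x}) > δ

/-- A body of constant diameter `δ`. -/
def ConstDiam (C : Set (Pt d)) (δ : ℝ) : Prop :=
  diam C = δ ∧ ∀ p, IsBdry C p → ∃ p' ∈ C, hdist p p' = δ


def sp (d : ℕ) (x y : EuclideanSpace ℝ (Fin (d + 1))) : ℝ :=
  ∑ i : Fin d, x i.castSucc * y i.castSucc

lemma mink_eq (x y : EuclideanSpace ℝ (Fin (d+1))) :
    mink d x y = sp d x y - x (Fin.last d) * y (Fin.last d) := rfl

lemma sp_symm (x y : EuclideanSpace ℝ (Fin (d+1))) : sp d x y = sp d y x := by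
  unfold sp; exact Finset.sum_congr rfl fun i _ => mul_comm _ _

lemma mink_symm (x y : EuclideanSpace ℝ (Fin (d+1))) : mink d x y = mink d y x := by
  rw [mink_eq, mink_eq, sp_symm]; ring

lemma sp_cs (x y : EuclideanSpace ℝ (Fin (d+1))) : (sp d x y)^2 ≤ sp d x x * sp d y y := by
  unfold sp
  have := Finset.sum_mul_sq_le_sq_mul_sq Finset.univ
    (fun i : Fin d => x i.castSucc) (fun i : Fin d => y i.castSucc)
  simpa [pow_two] using this

lemma sp_self_nonneg (x : EuclideanSpace ℝ (Fin (d+1))) : 0 ≤ sp d x x := by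
  unfold sp; exact Finset.sum_nonneg fun i _ => mul_self_nonneg _

lemma sp_self_eq_zero {x : EuclideanSpace ℝ (Fin (d+1))} (h : sp d x x = 0) :
    ∀ i : Fin d, x i.castSucc = 0 := by
  intro i
  have h' : ∀ j : Fin d, j ∈ Finset.univ → (0:ℝ) ≤ x j.castSucc * x j.castSucc :=
    fun j _ => mul_self_nonneg _
  have := (Finset.sum_eq_zero_iff_of_nonneg h').1 h i (Finset.mem_univ i)
  exact mul_self_eq_zero.1 this

lemma sp_sub_expand (x y : EuclideanSpace ℝ (Fin (d+1))) :
    sp d x x - 2 * sp d x y + sp d y y = ∑ i : Fin d, (x i.castSucc - y i.castSucc)^2 := by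
  unfold sp
  rw [Finset.mul_sum, ← Finset.sum_sub_distrib, ← Finset.sum_add_distrib]
  exact Finset.sum_congr rfl fun i _ => by ring

lemma mink_add_left (x y z : EuclideanSpace ℝ (Fin (d+1))) :
    mink d (x + y) z = mink d x z + mink d y z := by
  unfold mink
  have h1 : ∀ i : Fin (d+1), (x + y) i = x i + y i := fun i => rfl
  simp only [h1]
  rw [show (∑ i : Fin d, (x i.castSucc + y i.castSucc) * z i.castSucc)
      = (∑ i : Fin d, (x i.castSucc * z i.castSucc + y i.castSucc * z i.castSucc)) from
      Finset.sum_congr rfl fun i _ => by ring, Finset.sum_add_distrib]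
  ring

lemma mink_smul_left (a : ℝ) (x y : EuclideanSpace ℝ (Fin (d+1))) :
    mink d (a • x) y = a * mink d x y := by
  unfold mink
  have h1 : ∀ i : Fin (d+1), (a • x) i = a * x i := fun i => rfl
  simp only [h1]
  rw [show (∑ i : Fin d, a * x i.castSucc * y i.castSucc)
      = (∑ i : Fin d, a * (x i.castSucc * y i.castSucc)) from
      Finset.sum_congr rfl fun i _ => by ring, ← Finset.mul_sum]
  ring

lemma mink_sub_left (x y z : EuclideanSpace ℝ (Fin (d+1))) :
    mink d (x - y) z = mink d x z - mink d y z := by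
  have : x - y = x + (-1 : ℝ) • y := by
    rw [neg_one_smul]; abel
  rw [this, mink_add_left, mink_smul_left]; ring

lemma mink_add_right (x y z : EuclideanSpace ℝ (Fin (d+1))) :
    mink d x (y + z) = mink d x y + mink d x z := by
  rw [mink_symm, mink_add_left, mink_symm y x, mink_symm z x]

lemma mink_smul_right (a : ℝ) (x y : EuclideanSpace ℝ (Fin (d+1))) :
    mink d x (a • y) = a * mink d x y := by
  rw [mink_symm, mink_smul_left, mink_symm]

lemma mink_sub_right (x y z : EuclideanSpace ℝ (Fin (d+1))) :
    mink d x (y - z) = mink d x y - mink d x z := by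
  rw [mink_symm, mink_sub_left, mink_symm y x, mink_symm z x]

lemma apply_comb (a b : ℝ) (x y : EuclideanSpace ℝ (Fin (d+1))) (i : Fin (d+1)) :
    (a • x + b • y) i = a * x i + b * y i := rfl

lemma arcosh_one : arcosh 1 = 0 := by
  unfold arcosh; norm_num

lemma aux_pos {x : ℝ} (hx : 1 ≤ x) : 0 < x + Real.sqrt (x^2 - 1) := by
  have := Real.sqrt_nonneg (x^2 - 1); linarith

lemma arcosh_nonneg {x : ℝ} (hx : 1 ≤ x) : 0 ≤ arcosh x := by
  unfold arcosh
  have h : (1:ℝ) ≤ x + Real.sqrt (x^2-1) := by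
    have := Real.sqrt_nonneg (x^2 - 1); linarith
  exact Real.log_nonneg h

lemma arcosh_lt_arcosh {x y : ℝ} (hx : 1 ≤ x) (hxy : x < y) : arcosh x < arcosh y := by
  unfold arcosh
  apply Real.log_lt_log (aux_pos hx)
  have h1 : x^2 - 1 < y^2 - 1 := by nlinarith
  have := Real.sqrt_le_sqrt h1.le
  linarith

lemma arcosh_le_arcosh {x y : ℝ} (hx : 1 ≤ x) (hxy : x ≤ y) : arcosh x ≤ arcosh y := by
  rcases eq_or_lt_of_le hxy with h | h
  · rw [h]
  · exact (arcosh_lt_arcosh hx h).le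

lemma arcosh_cosh {x : ℝ} (hx : 0 ≤ x) : arcosh (Real.cosh x) = x := by
  unfold arcosh
  have h1 : Real.cosh x ^ 2 - 1 = Real.sinh x ^ 2 := by
    have := Real.cosh_sq_sub_sinh_sq x; nlinarith
  rw [h1, Real.sqrt_sq (Real.sinh_nonneg_iff.2 hx), Real.cosh_add_sinh, Real.log_exp]

lemma hyp_cs (x y : EuclideanSpace ℝ (Fin (d+1)))
    (hx : mink d x x = -1) (hxl : 0 < x (Fin.last d))
    (hy : mink d y y = -1) (hyl : 0 < y (Fin.last d)) :
    mink d x y ≤ -1 ∧ (mink d x y = -1 → x = y) := by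
  set A := sp d x x with hA
  set B := sp d y y with hB
  set Cc := sp d x y with hCc
  set xl := x (Fin.last d) with hxl'
  set yl := y (Fin.last d) with hyl'
  have hx2 : xl^2 = 1 + A := by
    have := mink_eq x x; rw [hx] at this; nlinarith [this]
  have hy2 : yl^2 = 1 + B := by
    have := mink_eq y y; rw [hy] at this; nlinarith [this]
  have hcs : Cc^2 ≤ A * B := sp_cs x y
  have hsum : 0 ≤ A - 2*Cc + B := by
    rw [hA, hB, hCc, sp_sub_expand]
    exact Finset.sum_nonneg fun i _ => sq_nonneg _
  have hA0 : 0 ≤ A := sp_self_nonneg x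
  have hB0 : 0 ≤ B := sp_self_nonneg y
  have hgoal : 1 + Cc ≤ xl * yl := by
    nlinarith [mul_pos hxl hyl, sq_nonneg (xl*yl - (1+Cc)), sq_nonneg (xl - yl), mul_pos hxl hyl]
  constructor
  · have := mink_eq x y; rw [this]; linarith
  · intro heq
    have hxy : xl * yl = 1 + Cc := by
      have := mink_eq x y; rw [heq] at this; linarith
    have hprod : (1+A)*(1+B) = (1+Cc)^2 := by
      have : (xl*yl)^2 = (1+A)*(1+B) := by rw [mul_pow, hx2, hy2]
      rw [hxy] at this; linarith
    have h1 : A - 2*Cc + B = 0 := by nlinarith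
    have hz : ∑ i : Fin d, (x i.castSucc - y i.castSucc)^2 = 0 := by
      rw [← sp_sub_expand]; linarith
    have hzz : ∀ i : Fin d, x i.castSucc = y i.castSucc := by
      intro i
      have h' : ∀ j : Fin d, j ∈ Finset.univ → (0:ℝ) ≤ (x j.castSucc - y j.castSucc)^2 :=
        fun j _ => sq_nonneg _
      have := (Finset.sum_eq_zero_iff_of_nonneg h').1 hz i (Finset.mem_univ i)
      have := pow_eq_zero_iff (n := 2) (by norm_num) |>.1 this
      linarith [this]
    have hAB : A = B := by
      rw [hA, hB]; unfold sp; exact Finset.sum_congr rfl fun i _ => by rw [hzz i]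
    have hxlyl : xl = yl := by
      have : xl^2 = yl^2 := by rw [hx2, hy2, hAB]
      nlinarith
    refine PiLp.ext fun i => ?_
    refine Fin.lastCases ?_ ?_ i
    · exact hxlyl
    · exact hzz

lemma timelike_orth (w y : EuclideanSpace ℝ (Fin (d+1)))
    (hw : mink d w w < 0) (hwy : mink d w y = 0) :
    0 ≤ mink d y y ∧ (mink d y y = 0 → y = 0) := by
  set W := sp d w w with hW
  set Y := sp d y y with hY
  set Cc := sp d w y with hCc
  set wl := w (Fin.last d) with hwl'
  set yl := y (Fin.last d) with hyl'
  have hW0 : 0 ≤ W := sp_self_nonneg w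
  have hY0 : 0 ≤ Y := sp_self_nonneg y
  have hw' : W - wl*wl < 0 := by have := mink_eq w w; rw [this] at hw; exact hw
  have hwy' : Cc = wl * yl := by have := mink_eq w y; rw [this] at hwy; linarith
  have hcs : Cc^2 ≤ W * Y := sp_cs w y
  have hwl0 : 0 < wl*wl := by linarith
  have hmy : mink d y y = Y - yl*yl := mink_eq y y
  have hCc2 : Cc^2 = (wl*wl)*(yl*yl) := by rw [hwy']; ring
  have key : 0 ≤ (Y - yl*yl) * (wl*wl) := by
    nlinarith [mul_nonneg hY0 (show (0:ℝ) ≤ wl*wl - W by linarith)]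
  constructor
  · rw [hmy]; nlinarith
  · intro h0
    rw [hmy] at h0
    have hYz : Y = 0 := by
      have hYle : Y ≤ 0 := by nlinarith
      linarith
    have hyz : ∀ i : Fin d, y i.castSucc = 0 := sp_self_eq_zero (by rw [← hY]; exact hYz)
    have hylz : yl = 0 := by nlinarith
    refine PiLp.ext fun i => ?_
    refine Fin.lastCases ?_ ?_ i
    · exact hylz
    · exact hyz

def plane' (v : EuclideanSpace ℝ (Fin (d + 1))) : Set (Pt d) := {p | mink d v p.1 = 0}

lemma pt_mink_le (p q : Pt d) : mink d p.1 q.1 ≤ -1 :=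
  (hyp_cs p.1 q.1 p.2.1 p.2.2 q.2.1 q.2.2).1

lemma pt_eq_of_mink (p q : Pt d) (h : mink d p.1 q.1 = -1) : p = q :=
  Subtype.ext ((hyp_cs p.1 q.1 p.2.1 p.2.2 q.2.1 q.2.2).2 h)

lemma one_le_neg_mink (p q : Pt d) : 1 ≤ -(mink d p.1 q.1) := by
  have := pt_mink_le p q; linarith

lemma hdist_self (p : Pt d) : hdist p p = 0 := by
  unfold hdist; rw [p.2.1]; norm_num [arcosh_one]

lemma hdist_nonneg (p q : Pt d) : 0 ≤ hdist p q := arcosh_nonneg (one_le_neg_mink p q)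

lemma plane_bound (v : EuclideanSpace ℝ (Fin (d+1))) (hv : mink d v v = 1)
    (g k : Pt d) (hk : mink d v k.1 = 0) :
    Real.sqrt (1 + (mink d v g.1)^2) ≤ -(mink d g.1 k.1) ∧
    (-(mink d g.1 k.1) = Real.sqrt (1 + (mink d v g.1)^2) →
      Real.sqrt (1 + (mink d v g.1)^2) • k.1 = g.1 - (mink d v g.1) • v) := by
  set α := mink d v g.1 with hα
  set β := Real.sqrt (1 + α^2) with hβ
  have hβ2 : β^2 = 1 + α^2 := Real.sq_sqrt (by positivity)
  have hβ0 : 0 ≤ β := Real.sqrt_nonneg _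
  have hβ1 : 1 ≤ β := by nlinarith
  set w := g.1 - α • v with hw
  have hgv : mink d g.1 v = α := by rw [mink_symm]
  have hww : mink d w w = -(β^2) := by
    rw [hw]
    simp only [mink_sub_left, mink_sub_right, mink_smul_left, mink_smul_right, g.2.1, hv, hgv]
    rw [← hα]
    nlinarith
  have hwk : mink d w k.1 = mink d g.1 k.1 := by
    rw [hw, mink_sub_left, mink_smul_left, hk]; ring
  set lam := mink d w k.1 / (-(β^2)) with hlam
  set y := k.1 - lam • w with hy
  have hβ2ne : -(β^2) ≠ 0 := by nlinarith
  have hwy : mink d w y = 0 := by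
    rw [hy, mink_sub_right, mink_smul_right, hww, hlam]
    field_simp
    ring
  have hwneg : mink d w w < 0 := by rw [hww]; nlinarith
  obtain ⟨hy0, hyz⟩ := timelike_orth w y hwneg hwy
  have hk1 : k.1 = lam • w + y := by rw [hy]; abel
  have hkk : (-1 : ℝ) = -(lam^2 * β^2) + mink d y y := by
    have hk' := k.2.1
    rw [hk1] at hk'
    simp only [mink_add_left, mink_add_right, mink_smul_left, mink_smul_right, hww, hwy,
      mink_symm y w] at hk'
    rw [← hk']; ring
  have hlb : 1 + mink d y y = lam^2 * β^2 := by linarith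
  have hwk2 : (mink d g.1 k.1)^2 = lam^2 * β^4 := by
    rw [← hwk]
    have : mink d w k.1 = lam * (-(β^2)) := by rw [hlam]; field_simp
    rw [this]; ring
  have hgk : mink d g.1 k.1 ≤ -1 := pt_mink_le g k
  constructor
  · nlinarith
  · intro heq
    have hsq : lam^2 * β^4 = β^2 := by rw [← hwk2, ← heq]; ring
    have h3 : (1 + mink d y y) * β^2 = lam^2 * β^4 := by rw [hlb]; ring
    have h4 : mink d y y * β^2 = 0 := by linear_combination h3 + hsq
    have hyy0 : mink d y y = 0 := by
      rcases mul_eq_zero.mp h4 with h | h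
      · exact h
      · nlinarith
    have hy00 : y = 0 := hyz hyy0
    have hk2 : k.1 = lam • w := by rw [hk1, hy00, add_zero]
    have hβne : β ≠ 0 := by linarith
    have hlamval : lam = 1/β := by
      have h1 : mink d w k.1 = -β := by rw [hwk, ← heq]; ring
      rw [hlam, h1]
      rw [div_eq_div_iff hβ2ne hβne]
      ring
    have hβlam : β * lam = 1 := by rw [hlamval]; field_simp
    rw [hk2, smul_smul, hβlam, one_smul]

lemma foot_exists (v : EuclideanSpace ℝ (Fin (d+1))) (hv : mink d v v = 1) (g : Pt d) :
    ∃ f : Pt d, mink d v f.1 = 0 ∧ -(mink d g.1 f.1) = Real.sqrt (1 + (mink d v g.1)^2) := by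
  set α := mink d v g.1 with hα
  set β := Real.sqrt (1 + α^2) with hβ
  have hβ2 : β^2 = 1 + α^2 := Real.sq_sqrt (by positivity)
  have hβ0 : 0 ≤ β := Real.sqrt_nonneg _
  have hβ1 : 1 ≤ β := by nlinarith
  have hβne : β ≠ 0 := by linarith
  set w := g.1 - α • v with hw
  have hgv : mink d g.1 v = α := by rw [mink_symm]
  have hww : mink d w w = -(β^2) := by
    rw [hw]
    simp only [mink_sub_left, mink_sub_right, mink_smul_left, mink_smul_right, g.2.1, hv, hgv]
    rw [← hα]
    nlinarith
  set f0 : EuclideanSpace ℝ (Fin (d+1)) := β⁻¹ • w with hf0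
  have hff : mink d f0 f0 = -1 := by
    rw [hf0, mink_smul_left, mink_smul_right, hww]
    field_simp
  have hvf : mink d v f0 = 0 := by
    rw [hf0, mink_smul_right, hw, mink_sub_right, mink_smul_right, hv, ← hα]
    ring
  have hgf : mink d g.1 f0 = -β := by
    rw [hf0, mink_smul_right, hw, mink_sub_right, mink_smul_right, g.2.1, hgv]
    have h1 : -1 - α * α = -(β*β) := by nlinarith
    rw [h1]
    field_simp
  have hflast : 0 < f0 (Fin.last d) := by
    rcases lt_trichotomy (f0 (Fin.last d)) 0 with hneg | hzero | hpos
    · exfalso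
      set f1 : EuclideanSpace ℝ (Fin (d+1)) := (-1 : ℝ) • f0 with hf1
      have hf1f1 : mink d f1 f1 = -1 := by
        rw [hf1, mink_smul_left, mink_smul_right, hff]; ring
      have hf1last : 0 < f1 (Fin.last d) := by
        have : f1 (Fin.last d) = -(f0 (Fin.last d)) := by
          rw [hf1, PiLp.smul_apply, smul_eq_mul]; ring
        rw [this]; linarith
      have := (hyp_cs g.1 f1 g.2.1 g.2.2 hf1f1 hf1last).1
      rw [hf1, mink_smul_right, hgf] at this
      nlinarith
    · exfalso
      have := mink_eq f0 f0
      rw [hff, hzero] at this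
      have := sp_self_nonneg f0
      nlinarith [this]
    · exact hpos
  exact ⟨⟨f0, hff, hflast⟩, hvf, by rw [hgf]; ring⟩

lemma mem_plane {v : EuclideanSpace ℝ (Fin (d+1))} {p : Pt d} :
    p ∈ plane v ↔ mink d v p.1 = 0 := Iff.rfl

lemma mem_of_isIntr {C : Set (Pt d)} {p : Pt d} (h : IsIntr C p) : p ∈ C := by
  obtain ⟨ε, hε, hball⟩ := h
  exact hball p (by rw [hdist_self]; exact hε)

lemma one_le_sqrt_one_add_sq (a : ℝ) : 1 ≤ Real.sqrt (1 + a^2) := by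
  have h := Real.sq_sqrt (show (0:ℝ) ≤ 1 + a^2 by positivity)
  nlinarith [Real.sqrt_nonneg (1 + a^2)]

lemma one_lt_sqrt_one_add_sq {a : ℝ} (ha : a ≠ 0) : 1 < Real.sqrt (1 + a^2) := by
  have h := Real.sq_sqrt (show (0:ℝ) ≤ 1 + a^2 by positivity)
  have ha2 : 0 < a^2 := by positivity
  nlinarith [Real.sqrt_nonneg (1 + a^2)]

lemma distPS_plane (v : EuclideanSpace ℝ (Fin (d+1))) (hv : mink d v v = 1) (p : Pt d) :
    distPS p (plane v) = arcosh (Real.sqrt (1 + (mink d v p.1)^2)) := by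
  obtain ⟨f, hf1, hf2⟩ := foot_exists v hv p
  have hfmem : f ∈ plane v := hf1
  have himg : hdist p f = arcosh (Real.sqrt (1 + (mink d v p.1)^2)) := by
    unfold hdist; rw [hf2]
  have hbdd : BddBelow (hdist p '' plane v) := by
    refine ⟨0, ?_⟩
    rintro r ⟨q, _, rfl⟩
    exact hdist_nonneg p q
  apply le_antisymm
  · have h1 : sInf (hdist p '' plane v) ≤ hdist p f := csInf_le hbdd ⟨f, hfmem, rfl⟩
    rw [himg] at h1
    exact h1
  · refine le_csInf ⟨hdist p f, ⟨f, hfmem, rfl⟩⟩ ?_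
    rintro b ⟨q, hq, rfl⟩
    exact arcosh_le_arcosh (one_le_sqrt_one_add_sq _) ((plane_bound v hv p q hq).1)

lemma proj_structure (v : EuclideanSpace ℝ (Fin (d+1))) (hv : mink d v v = 1)
    (g h₀ : Pt d) (hmem : mink d v h₀.1 = 0)
    (hmin : ∀ k ∈ plane v, hdist g h₀ ≤ hdist g k) :
    Real.sqrt (1 + (mink d v g.1)^2) • h₀.1 = g.1 - (mink d v g.1) • v := by
  obtain ⟨f, hf1, hf2⟩ := foot_exists v hv g
  have h1 : hdist g h₀ ≤ hdist g f := hmin f hf1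
  have hlow := (plane_bound v hv g h₀ hmem).1
  have heq : -(mink d g.1 h₀.1) = Real.sqrt (1 + (mink d v g.1)^2) := by
    by_contra hne
    have hlt : Real.sqrt (1 + (mink d v g.1)^2) < -(mink d g.1 h₀.1) :=
      lt_of_le_of_ne hlow (Ne.symm hne)
    have hmono := arcosh_lt_arcosh (one_le_sqrt_one_add_sq (mink d v g.1)) hlt
    unfold hdist at h1
    rw [hf2] at h1
    linarith
  exact (plane_bound v hv g h₀ hmem).2 heq

lemma perturb (v : EuclideanSpace ℝ (Fin (d+1))) (hv : mink d v v = 1) (j : Pt d)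
    (hαne : mink d v j.1 ≠ 0) {ε : ℝ} (hε : 0 < ε) :
    ∃ q : Pt d, hdist j q < ε ∧ (mink d v j.1)^2 < (mink d v q.1)^2 := by
  set α := mink d v j.1 with hα
  set β := Real.sqrt (1 + α^2) with hβ
  have hβ2 : β^2 = 1 + α^2 := Real.sq_sqrt (by positivity)
  have hβ1 : 1 ≤ β := one_le_sqrt_one_add_sq α
  have hβpos : 0 < β := by linarith
  have hβne : β ≠ 0 := ne_of_gt hβpos
  have hjv : mink d j.1 v = α := by rw [mink_symm, ← hα]
  set t := β⁻¹ • (α • j.1 + v) with ht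
  have haux : mink d (α • j.1 + v) (α • j.1 + v) = β^2 := by
    simp only [mink_add_left, mink_add_right, mink_smul_left, mink_smul_right, j.2.1, hv,
      hjv, ← hα]
    nlinarith [hβ2]
  have htt : mink d t t = 1 := by
    rw [ht, mink_smul_left, mink_smul_right, haux]
    field_simp
  have hjt : mink d j.1 t = 0 := by
    rw [ht, mink_smul_right, mink_add_right, mink_smul_right, j.2.1, hjv]
    ring
  have hvt : mink d v t = β := by
    rw [ht, mink_smul_right, mink_add_right, mink_smul_right, hv, ← hα]
    have h1 : α * α + 1 = β^2 := by nlinarith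
    rw [h1]
    field_simp
  clear_value t
  clear ht haux
  have hjlpos : 0 < j.1 (Fin.last d) := j.2.2
  set jl := j.1 (Fin.last d) with hjl
  set tl := t (Fin.last d) with htl
  have hposden : (0:ℝ) < |tl| + 1 := by positivity
  have hm : 0 < min (Real.sinh ε) (jl / (|tl| + 1)) := by
    apply lt_min
    · exact Real.sinh_pos_iff.2 hε
    · exact div_pos hjlpos hposden
  set r := min (Real.sinh ε) (jl / (|tl| + 1)) / 2 with hr
  have hrpos : 0 < r := by positivity
  have hrsinh : r < Real.sinh ε := by
    have h1 : min (Real.sinh ε) (jl / (|tl| + 1)) ≤ Real.sinh ε := min_le_left _ _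
    rw [hr]; linarith
  have hrtl : r * (|tl| + 1) < jl := by
    have h1 : r < jl / (|tl| + 1) := by
      have h2 := min_le_right (Real.sinh ε) (jl / (|tl| + 1))
      rw [hr]; linarith
    exact (lt_div_iff₀ hposden).mp h1
  clear_value r
  clear hr
  set s := Real.sqrt (1 + r^2) with hs
  have hs2 : s^2 = 1 + r^2 := Real.sq_sqrt (by positivity)
  have hs1 : 1 ≤ s := one_le_sqrt_one_add_sq r
  clear_value s
  clear hs
  obtain ⟨σ, hσ2, hσα, hσabs⟩ : ∃ σ : ℝ, σ^2 = 1 ∧ 0 < σ * α ∧ (σ = 1 ∨ σ = -1) := by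
    rcases lt_or_gt_of_ne hαne with hneg | hpos
    · exact ⟨-1, by norm_num, by nlinarith, Or.inr rfl⟩
    · exact ⟨1, by norm_num, by nlinarith, Or.inl rfl⟩
  have hql : 0 < s * jl + (σ * r) * tl := by
    have hb : -(r * |tl|) ≤ (σ * r) * tl := by
      have h1 : |(σ * r) * tl| = r * |tl| := by
        rcases hσabs with hσ1 | hσ1 <;>
          rw [hσ1, abs_mul, abs_mul] <;> simp [abs_of_pos hrpos]
      have h2 := neg_abs_le ((σ * r) * tl)
      rw [h1] at h2
      exact h2
    have h3 : r * |tl| < jl := by linarith [hrtl, hrpos]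
    have h4 : jl ≤ s * jl := by
      nlinarith [mul_nonneg (show (0:ℝ) ≤ s - 1 by linarith) hjlpos.le]
    linarith [hb, h3, h4]
  have hqm : s * (s * mink d j.1 j.1 + σ * r * mink d t j.1)
      + σ * r * (s * mink d j.1 t + σ * r * mink d t t) = -1 := by
    rw [j.2.1, htt, hjt, mink_symm t j.1, hjt]
    linear_combination (-1 : ℝ) * hs2 + r^2 * hσ2
  set q0 : EuclideanSpace ℝ (Fin (d+1)) := s • j.1 + (σ * r) • t with hq0
  have hq0q0 : mink d q0 q0 = -1 := by
    rw [hq0]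
    simp only [mink_add_left, mink_add_right, mink_smul_left, mink_smul_right]
    exact hqm
  have hq0last : 0 < q0 (Fin.last d) := by
    have happ : q0 (Fin.last d) = s * jl + (σ * r) * tl := apply_comb s (σ * r) j.1 t _
    rw [happ]
    exact hql
  clear hql hqm hrtl hm hposden hjlpos hjl htl
  clear jl tl
  refine ⟨⟨q0, hq0q0, hq0last⟩, ?_, ?_⟩
  · show arcosh (-(mink d j.1 q0)) < ε
    have hjq : mink d j.1 q0 = -s := by
      rw [hq0]
      simp only [mink_add_right, mink_smul_right, j.2.1, hjt]
      ring
    rw [hjq, neg_neg]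
    have hcosh : s < Real.cosh ε := by
      have hc : Real.cosh ε ^ 2 = 1 + Real.sinh ε ^ 2 := by
        linear_combination Real.cosh_sq_sub_sinh_sq ε
      have hcpos : 0 < Real.cosh ε := Real.cosh_pos ε
      have hr2 : r^2 < Real.sinh ε ^ 2 := by
        have := pow_lt_pow_left₀ hrsinh hrpos.le (n := 2) (by norm_num)
        exact this
      have hsc : s^2 < Real.cosh ε ^ 2 := by rw [hs2, hc]; linarith
      exact lt_of_pow_lt_pow_left₀ 2 hcpos.le hsc
    calc arcosh s < arcosh (Real.cosh ε) := arcosh_lt_arcosh hs1 hcosh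
      _ = ε := arcosh_cosh hε.le
  · show α^2 < (mink d v q0)^2
    have hvq : mink d v q0 = s * α + (σ * r) * β := by
      rw [hq0]
      simp only [mink_add_right, mink_smul_right, hvt, ← hα]
    have hα2pos : 0 < α^2 :=
      (sq_nonneg α).lt_of_ne (Ne.symm (pow_ne_zero 2 hαne))
    rw [hvq]
    have e : (s*α + (σ*r)*β)^2 = s^2*α^2 + 2*s*r*β*(σ*α) + r^2*β^2 := by
      linear_combination (r^2*β^2) * hσ2
    have hterm1 : 0 < 2*s*r*β*(σ*α) := by
      have h5 : (0:ℝ) < 2*s*r*β := by positivity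
      exact mul_pos h5 hσα
    have hterm2 : α^2 ≤ s^2 * α^2 := by
      nlinarith [mul_nonneg (mul_nonneg hrpos.le hrpos.le) hα2pos.le, hs2]
    have hterm3 : 0 ≤ r^2*β^2 := by positivity
    rw [e]
    linarith

/-- Lemma 3: the hyperplane through a farthest point `j` of `C`
from `H`, orthogonal to the segment `jh`, supports `C` and meets it only at `j`. -/
theorem perp_plane_at_farthest_point_supports {d : ℕ} (C : Set (Pt d)) (hC : IsBody C)
    (H : Set (Pt d)) (hH : Supports H C)
    (j : Pt d) (hjC : j ∈ C) (hjfar : ∀ c ∈ C, distPS c H ≤ distPS j H)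
    (h : Pt d) (hproj : IsProj j H h)
    (J : Set (Pt d)) (hJ : IsHyperplane J) (hperp : IsProj h J j) :
    Supports J C ∧ J ∩ C = {j} := by
  obtain ⟨⟨v, hv, hHv⟩, hHC, hHint⟩ := hH
  subst hHv
  obtain ⟨u, hu, hJu⟩ := hJ
  subst hJu
  obtain ⟨hjJ, hjmin⟩ := hperp
  obtain ⟨hhH, hhmin⟩ := hproj
  set α := mink d v j.1 with hα
  set β := Real.sqrt (1 + α^2) with hβ
  have hβ2 : β^2 = 1 + α^2 := Real.sq_sqrt (by positivity)
  have hβ1 : 1 ≤ β := one_le_sqrt_one_add_sq α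
  have hβpos : 0 < β := by linarith
  have hβne : β ≠ 0 := ne_of_gt hβpos
  have hdj : distPS j (plane v) = arcosh β := by
    rw [distPS_plane v hv j, ← hα, ← hβ]
  -- Step A : α ≠ 0
  obtain ⟨_, _, _, p₀, hp₀⟩ := hC
  have hp₀C : p₀ ∈ C := mem_of_isIntr hp₀
  have hp₀H : p₀ ∉ plane v := hHint p₀ hp₀
  have hα₀ : mink d v p₀.1 ≠ 0 := fun hh => hp₀H hh
  have hαne : α ≠ 0 := by
    intro h0
    have h1 : distPS p₀ (plane v) ≤ distPS j (plane v) := hjfar p₀ hp₀C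
    rw [distPS_plane v hv p₀, hdj] at h1
    have hβval : β = 1 := by rw [hβ, h0]; norm_num
    have h2 : arcosh 1 < arcosh (Real.sqrt (1 + (mink d v p₀.1)^2)) :=
      arcosh_lt_arcosh le_rfl (one_lt_sqrt_one_add_sq hα₀)
    rw [hβval] at h1
    linarith
  have hα2pos : 0 < α^2 := (sq_nonneg α).lt_of_ne (Ne.symm (pow_ne_zero 2 hαne))
  -- Step B
  have hB : β • h.1 = j.1 - α • v := by
    have := proj_structure v hv j h hhH hhmin
    rw [← hα, ← hβ] at this
    exact this
  -- Step C
  set γ := mink d u h.1 with hγ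
  set δ := Real.sqrt (1 + γ^2) with hδ
  have hδ2 : δ^2 = 1 + γ^2 := Real.sq_sqrt (by positivity)
  have hδ1 : 1 ≤ δ := one_le_sqrt_one_add_sq γ
  have hCeq : δ • j.1 = h.1 - γ • u := by
    have := proj_structure u hu h j hjJ hjmin
    rw [← hγ, ← hδ] at this
    exact this
  have hjv : mink d j.1 v = α := by rw [mink_symm, ← hα]
  clear_value α β γ δ
  have hjh1 : β * mink d j.1 h.1 = -1 - α * α := by
    have hbb := congrArg (fun x => mink d j.1 x) hB
    simp only [mink_smul_right, mink_sub_right, j.2.1, hjv] at hbb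
    linarith [hbb]
  have hjh : mink d j.1 h.1 = -β := by
    have h2 : β * mink d j.1 h.1 = β * (-β) := by linear_combination hjh1 + hβ2
    exact mul_left_cancel₀ hβne h2
  have hju : mink d j.1 u = 0 := by rw [mink_symm]; exact hjJ
  have hjh2 : -δ = mink d j.1 h.1 := by
    have hcc := congrArg (fun x => mink d j.1 x) hCeq
    simp only [mink_smul_right, mink_sub_right, j.2.1, hju] at hcc
    linarith [hcc]
  have hδβ : δ = β := by rw [hjh] at hjh2; linarith
  have hγ2 : γ^2 = α^2 := by
    linear_combination (-1 : ℝ) * hδ2 + hβ2 + (δ + β) * hδβ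
  have hγne : γ ≠ 0 := by
    intro h0
    rw [h0] at hγ2
    have hz : α^2 = 0 := by rw [← hγ2]; norm_num
    exact hαne ((pow_eq_zero_iff (two_ne_zero)).1 hz)
  have hh1 : h.1 = β⁻¹ • (j.1 - α • v) := by
    rw [← hB, smul_smul, inv_mul_cancel₀ hβne, one_smul]
  have hγu : γ • u = β⁻¹ • (j.1 - α • v) - β • j.1 := by
    have h1 : h.1 - δ • j.1 = γ • u := by rw [hCeq]; abel
    rw [← h1, hδβ, hh1]
  -- key characterization of plane u
  have hkey : ∀ p : Pt d, p ∈ plane u ↔ mink d v p.1 + α * mink d j.1 p.1 = 0 := by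
    intro p
    have e1 : mink d (γ • u) p.1 = γ * mink d u p.1 := mink_smul_left _ _ _
    have e2 : mink d (γ • u) p.1
        = β⁻¹ * (mink d j.1 p.1 - α * mink d v p.1) - β * mink d j.1 p.1 := by
      rw [hγu]
      simp only [mink_sub_left, mink_smul_left]
    have hβinv : β * β⁻¹ = 1 := mul_inv_cancel₀ hβne
    have e3 : β * (γ * mink d u p.1)
        = -α * (α * mink d j.1 p.1 + mink d v p.1) := by
      rw [← e1, e2]
      linear_combination (mink d j.1 p.1 - α * mink d v p.1) * hβinv - mink d j.1 p.1 * hβ2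
    constructor
    · intro h0
      have h0' : mink d u p.1 = 0 := h0
      rw [h0', mul_zero, mul_zero] at e3
      have h4 : α * mink d j.1 p.1 + mink d v p.1 = 0 := by
        rcases mul_eq_zero.mp e3.symm with h5 | h5
        · exact absurd (neg_eq_zero.mp h5) hαne
        · exact h5
      linarith
    · intro h0
      have h4 : α * mink d j.1 p.1 + mink d v p.1 = 0 := by linarith
      rw [h4, mul_zero] at e3
      have h5 : γ * mink d u p.1 = 0 :=
        mul_left_cancel₀ hβne (by rw [e3, mul_zero])
      have h6 : mink d u p.1 = 0 := by
        rcases mul_eq_zero.mp h5 with h7 | h7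
        · exact absurd h7 hγne
        · exact h7
      exact h6
  -- Step G : plane u ∩ C = {j}
  have hsingle : plane u ∩ C = {j} := by
    apply Set.eq_singleton_iff_unique_mem.mpr
    refine ⟨⟨hjJ, hjC⟩, ?_⟩
    rintro p ⟨hpJ, hpC⟩
    by_contra hne
    have hM := pt_mink_le j p
    have hMne : mink d j.1 p.1 ≠ -1 := fun hh => hne ((pt_eq_of_mink j p hh).symm)
    have hMlt : mink d j.1 p.1 < -1 := lt_of_le_of_ne hM hMne
    have hN : mink d v p.1 = -α * mink d j.1 p.1 := by
      have := (hkey p).1 hpJ; linarith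
    have hM2 : 1 < (mink d j.1 p.1)^2 := by nlinarith [hMlt]
    have hsq : α^2 < (mink d v p.1)^2 := by
      rw [hN]
      have e4 : (-α * mink d j.1 p.1)^2 = α^2 * (mink d j.1 p.1)^2 := by ring
      rw [e4]
      nlinarith [mul_lt_mul_of_pos_left hM2 hα2pos]
    have h1 : distPS p (plane v) ≤ distPS j (plane v) := hjfar p hpC
    rw [distPS_plane v hv p, hdj] at h1
    have h2 : arcosh β < arcosh (Real.sqrt (1 + (mink d v p.1)^2)) := by
      apply arcosh_lt_arcosh hβ1
      rw [hβ]
      exact Real.sqrt_lt_sqrt (by positivity) (by linarith)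
    linarith
  -- Step H : interior points of C avoid plane u
  have hintmiss : ∀ p, IsIntr C p → p ∉ plane u := by
    intro p hint hpJ
    have hpC : p ∈ C := mem_of_isIntr hint
    have hpj : p = j := by
      have hmem : p ∈ plane u ∩ C := ⟨hpJ, hpC⟩
      rw [hsingle] at hmem
      exact hmem
    obtain ⟨ε, hε, hball⟩ := hpj ▸ hint
    obtain ⟨q, hdq, hsq⟩ := perturb v hv j (by rw [← hα]; exact hαne) hε
    have hqC : q ∈ C := hball q hdq
    rw [← hα] at hsq
    have h1 : distPS q (plane v) ≤ distPS j (plane v) := hjfar q hqC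
    rw [distPS_plane v hv q, hdj] at h1
    have h2 : arcosh β < arcosh (Real.sqrt (1 + (mink d v q.1)^2)) := by
      apply arcosh_lt_arcosh hβ1
      rw [hβ]
      exact Real.sqrt_lt_sqrt (by positivity) (by linarith)
    linarith
  exact ⟨⟨⟨u, hu, rfl⟩, ⟨j, hjJ, hjC⟩, hintmiss⟩, hsingle⟩

end HypSpace
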